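/- arXiv:1310.2014 — 7 statements merged into one kernel-verified Lean document; each statement's English description precedes it below -/
import Mathlib

section
/- (Complementarity dual principle, one-dimensional instance.) Fix real parameters q, c, d, e. Suppose (x̄, μ̄, σ̄) ∈ ℝ³ is a critical point of Ξ₁(x, μ, σ) = ½(q + μσ)x² − cx − μ(½σ² + σd + e) (all three partial derivatives vanish at (x̄, μ̄, σ̄)), with μ̄ ≠ 0 and q + μ̄σ̄ ≠ 0. Then x̄ is a KKT point of the problem min{½qx² − cx : ½(½x² − d)² − e = 0}, i.e. h(x̄) = 0 and qx̄ − c + μ̄·h'(x̄) = 0 where h(x) = ½(½x² − d)² − e; moreover there is no duality gap: f(x̄) = Ξ₁(x̄, μ̄, σ̄) = P^d(μ̄, σ̄), where f(x) = ½qx² − cx and P^d(μ, σ) = −c²/(2(q + μσ)) − μ(½σ² + σd + e). -/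
/-- The total complementarity function
`Ξ₁(x, μ, σ) = ½(q + μσ)x² − cx − μ(½σ² + σd + e)`. -/
noncomputable def Xi1 (q c d e : ℝ) (x μ σ : ℝ) : ℝ :=
  (1/2) * (q + μ * σ) * x ^ 2 - c * x - μ * (σ ^ 2 / 2 + σ * d + e)

lemma deriv_quartic (A B C D t : ℝ) :
    deriv (fun x : ℝ => A * x ^ 4 + B * x ^ 2 + C * x + D) t
      = 4 * A * t ^ 3 + 2 * B * t + C := by
  have h := ((((hasDerivAt_pow 4 t).const_mul A).add
      ((hasDerivAt_pow 2 t).const_mul B)).add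
        ((hasDerivAt_id t).const_mul C)).add_const D
  simp only [id_eq, Pi.add_apply] at h
  rw [h.deriv]; norm_num; ring

/-- Complementarity dual principle, one-dimensional instance:
if `(x̄, μ̄, σ̄)` is a critical point of `Ξ₁` with `μ̄ ≠ 0` and
`q + μ̄σ̄ ≠ 0`, then `x̄` is a KKT point of
`min {½qx² − cx : ½(½x² − d)² − e = 0}` and there is no duality gap:
`f(x̄) = Ξ₁(x̄, μ̄, σ̄) = P^d(μ̄, σ̄)`. -/
theorem complementarity_dual_principle_1d
    (q c d e : ℝ) (xb μb σb : ℝ)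
    (hx : deriv (fun x => Xi1 q c d e x μb σb) xb = 0)
    (hμ : deriv (fun μ => Xi1 q c d e xb μ σb) μb = 0)
    (hσ : deriv (fun σ => Xi1 q c d e xb μb σ) σb = 0)
    (hμ0 : μb ≠ 0) (hG : q + μb * σb ≠ 0) :
    ((1/2) * ((1/2) * xb ^ 2 - d) ^ 2 - e = 0 ∧
      q * xb - c
        + μb * deriv (fun x => (1/2) * ((1/2) * x ^ 2 - d) ^ 2 - e) xb = 0) ∧
    (1/2) * q * xb ^ 2 - c * xb = Xi1 q c d e xb μb σb ∧
    Xi1 q c d e xb μb σb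
      = -(c ^ 2) / (2 * (q + μb * σb)) - μb * (σb ^ 2 / 2 + σb * d + e) := by
  -- rewrite each partial as an explicit polynomial and use deriv_quartic
  have ex : (fun x => Xi1 q c d e x μb σb)
      = fun x : ℝ => (0:ℝ) * x ^ 4 + ((1/2) * (q + μb * σb)) * x ^ 2
        + (-c) * x + (- μb * (σb ^ 2 / 2 + σb * d + e)) := by
    funext x; simp [Xi1]; ring
  have eμ : (fun μ => Xi1 q c d e xb μ σb)
      = fun μ : ℝ => (0:ℝ) * μ ^ 4 + (0:ℝ) * μ ^ 2
        + ((1/2) * σb * xb ^ 2 - (σb ^ 2 / 2 + σb * d + e)) * μ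
        + ((1/2) * q * xb ^ 2 - c * xb) := by
    funext μ; simp [Xi1]; ring
  have eσ : (fun σ => Xi1 q c d e xb μb σ)
      = fun σ : ℝ => (0:ℝ) * σ ^ 4 + (-(μb / 2)) * σ ^ 2
        + ((1/2) * μb * xb ^ 2 - μb * d) * σ
        + ((1/2) * q * xb ^ 2 - c * xb - μb * e) := by
    funext σ; simp [Xi1]; ring
  rw [ex, deriv_quartic] at hx
  rw [eμ, deriv_quartic] at hμ
  rw [eσ, deriv_quartic] at hσ
  -- from hσ and μb ≠ 0 : (1/2) xb^2 = σb + d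
  have hs : (1/2) * xb ^ 2 - d = σb := by
    have := hσ
    have h' : μb * ((1/2) * xb ^ 2 - d - σb) = 0 := by ring_nf; ring_nf at this; linarith
    rcases mul_eq_zero.mp h' with h | h
    · exact absurd h hμ0
    · linarith
  -- from hμ : (1/2) σb xb^2 = σb^2/2 + σb d + e
  have hmu' : (1/2) * σb * xb ^ 2 - (σb ^ 2 / 2 + σb * d + e) = 0 := by linarith
  -- from hx : (q + μb σb) xb = c
  have hx' : (q + μb * σb) * xb = c := by linarith
  have hh : (1/2) * ((1/2) * xb ^ 2 - d) ^ 2 - e = 0 := by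
    have hx2 : xb ^ 2 = 2 * (σb + d) := by linarith
    rw [hs]; linear_combination hmu' - (σb / 2) * hx2
  refine ⟨⟨hh, ?_⟩, ?_, ?_⟩
  · have eh : (fun x : ℝ => (1/2) * ((1/2) * x ^ 2 - d) ^ 2 - e)
        = fun x : ℝ => (1/8 : ℝ) * x ^ 4 + (-(d/2)) * x ^ 2 + (0:ℝ) * x
          + (d ^ 2 / 2 - e) := by
      funext x; ring
    rw [eh, deriv_quartic]
    linear_combination hx' + μb * xb * hs
  · simp only [Xi1]; linear_combination -μb * hmu'
  · simp only [Xi1]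
    have hc : c = (q + μb * σb) * xb := hx'.symm
    have h2G : (2 : ℝ) * (q + μb * σb) ≠ 0 := mul_ne_zero two_ne_zero hG
    rw [hc]
    have key : -(((q + μb * σb) * xb) ^ 2) / (2 * (q + μb * σb))
        = -((1/2) * (q + μb * σb) * xb ^ 2) := by
      rw [div_eq_iff h2G]; ring
    rw [key]; ring
end

section
/- (Global optimality conditions, one-dimensional instance.) Fix real parameters q, c, d, e. Suppose (x̄, μ̄, σ̄) ∈ ℝ³ is a critical point of Ξ₁(x, μ, σ) = ½(q + μσ)x² − cx − μ(½σ² + σd + e) with μ̄ > 0 and q + μ̄σ̄ > 0. Then x̄ is a global minimizer of f(x) = ½qx² − cx over the feasible set {x ∈ ℝ : ½(½x² − d)² − e = 0}: for every x ∈ ℝ with ½(½x² − d)² − e = 0, one has f(x̄) ≤ f(x). -/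
private lemma quad_deriv (a b k t : ℝ) :
    HasDerivAt (fun s : ℝ => a * s ^ 2 + b * s + k) (2 * a * t + b) t := by
  have h := (((hasDerivAt_pow 2 t).const_mul a).add
    ((hasDerivAt_id t).const_mul b)).add_const k
  exact h.congr_deriv (by push_cast; ring)

/-- Global optimality conditions, one-dimensional instance: if
`(x̄, μ̄, σ̄)` is a critical point of `Ξ₁` with `μ̄ > 0` and `q + μ̄σ̄ > 0`,
then `x̄` is a global minimizer of `f(x) = ½qx² − cx` over the feasible set
`{x : ½(½x² − d)² − e = 0}`. -/
theorem global_optimality_1d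
    (q c d e : ℝ) (xb μb σb : ℝ)
    (hx : deriv (fun x => Xi1 q c d e x μb σb) xb = 0)
    (hμ : deriv (fun μ => Xi1 q c d e xb μ σb) μb = 0)
    (hσ : deriv (fun σ => Xi1 q c d e xb μb σ) σb = 0)
    (hμpos : 0 < μb) (hG : 0 < q + μb * σb) :
    ∀ x : ℝ, (1/2) * ((1/2) * x ^ 2 - d) ^ 2 - e = 0 →
      (1/2) * q * xb ^ 2 - c * xb ≤ (1/2) * q * x ^ 2 - c * x := by
  have Hx : HasDerivAt (fun x => Xi1 q c d e x μb σb)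
      ((q + μb * σb) * xb - c) xb := by
    have hfun : (fun x => Xi1 q c d e x μb σb)
        = fun x => ((1/2) * (q + μb * σb)) * x ^ 2 + (-c) * x
            + (-(μb * (σb ^ 2 / 2 + σb * d + e))) := by
      funext y; simp [Xi1]; ring
    rw [hfun]
    have := quad_deriv ((1/2) * (q + μb * σb)) (-c)
      (-(μb * (σb ^ 2 / 2 + σb * d + e))) xb
    convert this using 1; ring
  have Hμ : HasDerivAt (fun μ => Xi1 q c d e xb μ σb)
      ((1/2) * σb * xb ^ 2 - (σb ^ 2 / 2 + σb * d + e)) μb := by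
    have hfun : (fun μ => Xi1 q c d e xb μ σb)
        = fun μ => (0 : ℝ) * μ ^ 2
            + ((1/2) * σb * xb ^ 2 - (σb ^ 2 / 2 + σb * d + e)) * μ
            + ((1/2) * q * xb ^ 2 - c * xb) := by
      funext y; simp [Xi1]; ring
    rw [hfun]
    have := quad_deriv 0 ((1/2) * σb * xb ^ 2 - (σb ^ 2 / 2 + σb * d + e))
      ((1/2) * q * xb ^ 2 - c * xb) μb
    convert this using 1; ring
  have Hσ : HasDerivAt (fun σ => Xi1 q c d e xb μb σ)
      ((1/2) * μb * xb ^ 2 - μb * (σb + d)) σb := by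
    have hfun : (fun σ => Xi1 q c d e xb μb σ)
        = fun σ => (-(μb/2)) * σ ^ 2 + ((1/2) * μb * xb ^ 2 - μb * d) * σ
            + ((1/2) * q * xb ^ 2 - c * xb - μb * e) := by
      funext y; simp [Xi1]; ring
    rw [hfun]
    have := quad_deriv (-(μb/2)) ((1/2) * μb * xb ^ 2 - μb * d)
      ((1/2) * q * xb ^ 2 - c * xb - μb * e) σb
    convert this using 1; ring
  have e1 : (q + μb * σb) * xb - c = 0 := Hx.deriv ▸ hx
  have e2 : (1/2) * σb * xb ^ 2 - (σb ^ 2 / 2 + σb * d + e) = 0 := Hμ.deriv ▸ hμ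
  have e3 : (1/2) * μb * xb ^ 2 - μb * (σb + d) = 0 := Hσ.deriv ▸ hσ
  have hσb : σb = (1/2) * xb ^ 2 - d := by
    have h : μb * ((1/2) * xb ^ 2 - (σb + d)) = 0 := by linear_combination e3
    rcases mul_eq_zero.mp h with h' | h'
    · exact absurd h' (ne_of_gt hμpos)
    · linarith
  subst hσb
  have he : e = ((1/2) * xb ^ 2 - d) ^ 2 / 2 := by nlinarith [e2]
  subst he
  intro x hfeas
  have key : ((1/2) * q * x ^ 2 - c * x) - ((1/2) * q * xb ^ 2 - c * xb)
      = (1/2) * ((q + μb * ((1/2) * xb ^ 2 - d)) * (x - xb) ^ 2)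
        + (μb / 8) * (x ^ 2 - xb ^ 2) ^ 2
        - μb * ((1/2) * ((1/2) * x ^ 2 - d) ^ 2 - ((1/2) * xb ^ 2 - d) ^ 2 / 2)
        + ((q + μb * ((1/2) * xb ^ 2 - d)) * xb - c) * (x - xb) := by ring
  have h1 : ((q + μb * ((1/2) * xb ^ 2 - d)) * xb - c) * (x - xb) = 0 :=
    mul_eq_zero_of_left e1 _
  have h2 : μb * ((1/2) * ((1/2) * x ^ 2 - d) ^ 2 - ((1/2) * xb ^ 2 - d) ^ 2 / 2) = 0 :=
    mul_eq_zero_of_right μb hfeas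
  have h3 : 0 ≤ (q + μb * ((1/2) * xb ^ 2 - d)) * (x - xb) ^ 2 :=
    mul_nonneg hG.le (sq_nonneg _)
  have h4 : 0 ≤ μb * (x ^ 2 - xb ^ 2) ^ 2 := mul_nonneg hμpos.le (sq_nonneg _)
  nlinarith [key, h1, h2, h3, h4]
end

section
/- (Inverse global optimality, one-dimensional instance.) Fix real parameters q, c, d, e. Suppose (x̄, μ̄, σ̄) ∈ ℝ³ is a critical point of Ξ₁(x, μ, σ) = ½(q + μσ)x² − cx − μ(½σ² + σd + e) with μ̄ < 0 and q + μ̄σ̄ < 0. Then x̄ is a global maximizer of f(x) = ½qx² − cx over the feasible set {x ∈ ℝ : ½(½x² − d)² − e = 0}: for every x ∈ ℝ with ½(½x² − d)² − e = 0, one has f(x) ≤ f(x̄). -/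
set_option maxHeartbeats 800000 in
/-- Inverse global optimality, one-dimensional instance: if
`(x̄, μ̄, σ̄)` is a critical point of `Ξ₁` with `μ̄ < 0` and `q + μ̄σ̄ < 0`,
then `x̄` is a global maximizer of `f(x) = ½qx² − cx` over the feasible set
`{x : ½(½x² − d)² − e = 0}`. -/
theorem inverse_global_optimality_1d
    (q c d e : ℝ) (xb μb σb : ℝ)
    (hx : deriv (fun x => Xi1 q c d e x μb σb) xb = 0)
    (hμ : deriv (fun μ => Xi1 q c d e xb μ σb) μb = 0)
    (hσ : deriv (fun σ => Xi1 q c d e xb μb σ) σb = 0)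
    (hμneg : μb < 0) (hG : q + μb * σb < 0) :
    ∀ x : ℝ, (1/2) * ((1/2) * x ^ 2 - d) ^ 2 - e = 0 →
      (1/2) * q * x ^ 2 - c * x ≤ (1/2) * q * xb ^ 2 - c * xb := by
  have Hx : HasDerivAt (fun x => Xi1 q c d e x μb σb)
      ((1/2) * (q + μb * σb) * (2 * xb ^ 1) - c * 1) xb := by
    unfold Xi1
    exact (((hasDerivAt_pow 2 xb).const_mul ((1/2) * (q + μb * σb))).sub
      ((hasDerivAt_id xb).const_mul c)).sub_const _
  have Hμ : HasDerivAt (fun μ => Xi1 q c d e xb μ σb)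
      ((1 * σb) * xb ^ 2 / 2 - 1 * (σb ^ 2 / 2 + σb * d + e)) μb := by
    unfold Xi1
    have h1 : HasDerivAt (fun μ : ℝ => (1/2) * (q + μ * σb) * xb ^ 2)
        ((1 * σb) * xb ^ 2 / 2) μb := by
      have := (((hasDerivAt_id μb).mul_const σb).const_add q).const_mul (1/2)
      have := this.mul_const (xb ^ 2)
      exact this.congr_deriv (by ring)
    exact (h1.sub_const (c * xb)).sub ((hasDerivAt_id μb).mul_const _)
  have Hσ : HasDerivAt (fun σ => Xi1 q c d e xb μb σ)
      (μb * xb ^ 2 / 2 - μb * (σb + d)) σb := by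
    unfold Xi1
    have h1 : HasDerivAt (fun σ : ℝ => (1/2) * (q + μb * σ) * xb ^ 2)
        (μb * xb ^ 2 / 2) σb := by
      have := (((hasDerivAt_id σb).const_mul μb).const_add q).const_mul (1/2)
      have := this.mul_const (xb ^ 2)
      exact this.congr_deriv (by ring)
    have h2 : HasDerivAt (fun σ : ℝ => μb * (σ ^ 2 / 2 + σ * d + e))
        (μb * (σb + d)) σb := by
      have h3 : HasDerivAt (fun σ : ℝ => σ ^ 2 / 2 + σ * d + e)
          (σb + d) σb := by
        have := (((hasDerivAt_pow 2 σb).div_const 2).add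
          ((hasDerivAt_id σb).mul_const d)).add_const e
        exact this.congr_deriv (by ring)
      exact h3.const_mul μb
    exact ((h1.sub_const (c * xb)).sub h2)
  have hx' : (q + μb * σb) * xb - c = 0 := by
    have := Hx.deriv; rw [hx] at this; nlinarith [this]
  have hμ' : σb * xb ^ 2 / 2 - (σb ^ 2 / 2 + σb * d + e) = 0 := by
    have := Hμ.deriv; rw [hμ] at this; nlinarith [this]
  have hσ' : μb * xb ^ 2 / 2 - μb * (σb + d) = 0 := by
    have := Hσ.deriv; rw [hσ] at this; linarith [this]
  have hμne : μb ≠ 0 := ne_of_lt hμneg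
  -- xb^2 / 2 = σb + d
  have h1 : xb ^ 2 / 2 = σb + d := by
    have : μb * (xb ^ 2 / 2 - (σb + d)) = 0 := by ring_nf; linarith [hσ']
    have := mul_eq_zero.mp this
    rcases this with h | h
    · exact absurd h hμne
    · linarith
  -- e = σb^2 / 2
  have h2 : e = σb ^ 2 / 2 := by linear_combination -hμ' + σb * h1
  intro x hfeas
  -- t = x^2/2 - d, t^2 = σb^2
  have h3 : ((1/2) * x ^ 2 - d) ^ 2 = σb ^ 2 := by nlinarith [hfeas]
  -- σb * t ≤ σb^2
  have h4 : σb * ((1/2) * x ^ 2 - d) ≤ σb ^ 2 := by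
    nlinarith [sq_nonneg (σb - ((1/2) * x ^ 2 - d)), sq_nonneg (σb + ((1/2) * x ^ 2 - d))]
  -- g(x) ≤ 0, so μb * g(x) ≥ 0
  have h5 : μb * (σb * x ^ 2 / 2 - (σb ^ 2 / 2 + σb * d + e)) ≥ 0 := by
    have hg : σb * x ^ 2 / 2 - (σb ^ 2 / 2 + σb * d + e) ≤ 0 := by
      nlinarith [h4, h2]
    nlinarith [mul_nonneg (le_of_lt (neg_pos.mpr hμneg)) (neg_nonneg.mpr hg)]
  -- concavity step
  have h6 : (1/2) * (q + μb * σb) * x ^ 2 - c * x ≤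
      (1/2) * (q + μb * σb) * xb ^ 2 - c * xb := by
    have key : (1/2) * (q + μb * σb) * xb ^ 2 - c * xb -
        ((1/2) * (q + μb * σb) * x ^ 2 - c * x) =
        (1/2) * (-(q + μb * σb)) * (x - xb) ^ 2 := by
      linear_combination (xb - x) * hx'
    linarith [mul_nonneg (le_of_lt (neg_pos.mpr hG)) (sq_nonneg (x - xb)), key]
  have h7 : μb * (σb * xb ^ 2 / 2 - (σb ^ 2 / 2 + σb * d + e)) = 0 := by
    linear_combination μb * hμ'
  have key2 : ((1/2) * q * x ^ 2 - c * x) - ((1/2) * q * xb ^ 2 - c * xb) =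
      (((1/2) * (q + μb * σb) * x ^ 2 - c * x) -
        ((1/2) * (q + μb * σb) * xb ^ 2 - c * xb))
      - μb * (σb * x ^ 2 / 2 - (σb ^ 2 / 2 + σb * d + e))
      + μb * (σb * xb ^ 2 / 2 - (σb ^ 2 / 2 + σb * d + e)) := by ring
  linarith [h5, h6, h7, key2]
end

section
/- (Complementarity dual principle, n-dimensional quadratic instance.) Let A be a symmetric n×n real matrix, c ∈ ℝⁿ, and d, e ∈ ℝ. Suppose (x̄, μ̄, σ̄) ∈ ℝⁿ × ℝ × ℝ is a critical point of Ξ₁(x, μ, σ) = ½⟨x, (A + μσI)x⟩ − ⟨c, x⟩ − μ(½σ² + σd + e), i.e. (A + μ̄σ̄I)x̄ = c, σ̄(½‖x̄‖²) = ½σ̄² + σ̄d + e, and μ̄(½‖x̄‖² − σ̄ − d) = 0, with μ̄ ≠ 0 and A + μ̄σ̄I invertible. Then x̄ is a KKT point of min{½⟨x, Ax⟩ − ⟨c, x⟩ : ½(½‖x‖² − d)² − e = 0}: h(x̄) = 0 and Ax̄ − c + μ̄∇h(x̄) = 0 where h(x) = ½(½‖x‖² − d)² − e; and there is no duality gap: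 f(x̄) = Ξ₁(x̄, μ̄, σ̄) = −½⟨c, (A + μ̄σ̄I)⁻¹c⟩ − μ̄(½σ̄² + σ̄d + e), where f(x) = ½⟨x, Ax⟩ − ⟨c, x⟩. -/
open Matrix

/-- Complementarity dual principle, n-dimensional quadratic
instance: a critical point `(x̄, μ̄, σ̄)` of
`Ξ₁(x, μ, σ) = ½⟨x,(A + μσI)x⟩ − ⟨c,x⟩ − μ(½σ² + σd + e)` with `μ̄ ≠ 0` and
`A + μ̄σ̄I` invertible yields a KKT point of
`min {½⟨x,Ax⟩ − ⟨c,x⟩ : ½(½‖x‖² − d)² − e = 0}` with zero duality gap. -/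
theorem complementarity_dual_principle_nd
    (n : ℕ) (A : Matrix (Fin n) (Fin n) ℝ) (hA : A.IsSymm)
    (c : Fin n → ℝ) (d e : ℝ) (xb : Fin n → ℝ) (μb σb : ℝ)
    (h1 : (A + (μb * σb) • (1 : Matrix (Fin n) (Fin n) ℝ)).mulVec xb = c)
    (h2 : σb * ((1/2) * (xb ⬝ᵥ xb)) = σb ^ 2 / 2 + σb * d + e)
    (h3 : μb * ((1/2) * (xb ⬝ᵥ xb) - σb - d) = 0)
    (hμ : μb ≠ 0)
    (hinv : IsUnit (A + (μb * σb) • (1 : Matrix (Fin n) (Fin n) ℝ))) :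
    ((1/2) * ((1/2) * (xb ⬝ᵥ xb) - d) ^ 2 - e = 0 ∧
      A.mulVec xb - c + μb • (((1/2) * (xb ⬝ᵥ xb) - d) • xb) = 0) ∧
    (1/2) * (xb ⬝ᵥ A.mulVec xb) - c ⬝ᵥ xb
      = (1/2) * (xb ⬝ᵥ (A + (μb * σb) • (1 : Matrix (Fin n) (Fin n) ℝ)).mulVec xb)
        - c ⬝ᵥ xb - μb * (σb ^ 2 / 2 + σb * d + e) ∧
    (1/2) * (xb ⬝ᵥ (A + (μb * σb) • (1 : Matrix (Fin n) (Fin n) ℝ)).mulVec xb)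
        - c ⬝ᵥ xb - μb * (σb ^ 2 / 2 + σb * d + e)
      = -(1/2) * (c ⬝ᵥ (A + (μb * σb) • (1 : Matrix (Fin n) (Fin n) ℝ))⁻¹.mulVec c)
        - μb * (σb ^ 2 / 2 + σb * d + e) := by
  set M := A + (μb * σb) • (1 : Matrix (Fin n) (Fin n) ℝ) with hM
  -- from h3 and μb ≠ 0: ½‖x‖² − d = σb
  have hσ : (1/2) * (xb ⬝ᵥ xb) - d = σb := by
    rcases mul_eq_zero.mp h3 with h | h
    · exact absurd h hμ
    · linarith
  have hxx : xb ⬝ᵥ xb = 2 * (σb + d) := by linarith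
  -- from h2: σb²/2 = e
  have he : σb ^ 2 / 2 = e := by rw [hxx] at h2; nlinarith [h2]
  -- expand M.mulVec xb
  have hMx : M.mulVec xb = A.mulVec xb + (μb * σb) • xb := by
    simp [hM, add_mulVec, smul_mulVec, one_mulVec]
  refine ⟨⟨by rw [hσ]; linarith, ?_⟩, ?_, ?_⟩
  · have := h1
    rw [hMx] at this
    rw [hσ]
    have : A.mulVec xb - c + (μb * σb) • xb = 0 := by
      rw [← this]; abel
    simpa [smul_smul] using this
  · rw [hMx, dotProduct_add, dotProduct_smul, smul_eq_mul, hxx]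
    linear_combination (-μb) * he
  · -- M⁻¹.mulVec c = xb
    have hdet : IsUnit M.det := (isUnit_iff_isUnit_det M).mp hinv
    have hinvx : M⁻¹.mulVec c = xb := by
      rw [← h1, mulVec_mulVec, nonsing_inv_mul M hdet, one_mulVec]
    rw [hinvx, h1, dotProduct_comm xb c]
    ring
end

section
/- (Global optimality conditions, n-dimensional quadratic instance.) Let A be a symmetric n×n real matrix, c ∈ ℝⁿ, d, e ∈ ℝ. Suppose (x̄, μ̄, σ̄) ∈ ℝⁿ × ℝ × ℝ is a critical point of Ξ₁(x, μ, σ) = ½⟨x, (A + μσI)x⟩ − ⟨c, x⟩ − μ(½σ² + σd + e), with μ̄ > 0 and A + μ̄σ̄I positive definite. Then x̄ is a global minimizer of f(x) = ½⟨x, Ax⟩ − ⟨c, x⟩ over the feasible set {x ∈ ℝⁿ : ½(½‖x‖² − d)² − e = 0}: for every x in this set, f(x̄) ≤ f(x). -/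
open Matrix

/-- Global optimality conditions, n-dimensional quadratic
instance: a critical point `(x̄, μ̄, σ̄)` of
`Ξ₁(x, μ, σ) = ½⟨x,(A + μσI)x⟩ − ⟨c,x⟩ − μ(½σ² + σd + e)` with `μ̄ > 0` and
`A + μ̄σ̄I` positive definite yields a global minimizer `x̄` of
`f(x) = ½⟨x,Ax⟩ − ⟨c,x⟩` over `{x : ½(½‖x‖² − d)² − e = 0}`. -/
theorem global_optimality_nd
    (n : ℕ) (A : Matrix (Fin n) (Fin n) ℝ) (hA : A.IsSymm)
    (c : Fin n → ℝ) (d e : ℝ) (xb : Fin n → ℝ) (μb σb : ℝ)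
    (h1 : (A + (μb * σb) • (1 : Matrix (Fin n) (Fin n) ℝ)).mulVec xb = c)
    (h2 : σb * ((1/2) * (xb ⬝ᵥ xb)) = σb ^ 2 / 2 + σb * d + e)
    (h3 : μb * ((1/2) * (xb ⬝ᵥ xb) - σb - d) = 0)
    (hμpos : 0 < μb)
    (hpd : (A + (μb * σb) • (1 : Matrix (Fin n) (Fin n) ℝ)).PosDef) :
    ∀ x : Fin n → ℝ, (1/2) * ((1/2) * (x ⬝ᵥ x) - d) ^ 2 - e = 0 →
      (1/2) * (xb ⬝ᵥ A.mulVec xb) - c ⬝ᵥ xb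
        ≤ (1/2) * (x ⬝ᵥ A.mulVec x) - c ⬝ᵥ x := by
  intro x hx
  set B := A + (μb * σb) • (1 : Matrix (Fin n) (Fin n) ℝ) with hB
  have hBsymm : B.IsSymm := by
    unfold Matrix.IsSymm at hA ⊢
    simp [hB, Matrix.transpose_add, hA, Matrix.transpose_smul]
  -- nonnegativity of quadratic form at x - xb
  have hq : 0 ≤ (x - xb) ⬝ᵥ B.mulVec (x - xb) := by
    have := hpd.posSemidef.dotProduct_mulVec_nonneg (x - xb)
    simpa using this
  -- key expansions
  have hBx : ∀ v : Fin n → ℝ, B.mulVec v = A.mulVec v + (μb * σb) • v := by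
    intro v
    simp [hB, Matrix.add_mulVec, Matrix.smul_mulVec, Matrix.one_mulVec]
  have hsym : xb ⬝ᵥ B.mulVec x = c ⬝ᵥ x := by
    rw [Matrix.dotProduct_mulVec]
    have : B.vecMul xb = c := by
      rw [← Matrix.mulVec_transpose, hBsymm, h1]
    rw [this]
  have hxc : x ⬝ᵥ B.mulVec xb = x ⬝ᵥ c := by rw [h1]
  have hxbc : xb ⬝ᵥ B.mulVec xb = xb ⬝ᵥ c := by rw [h1]
  have key : (x - xb) ⬝ᵥ B.mulVec (x - xb)
      = x ⬝ᵥ B.mulVec x - x ⬝ᵥ c - c ⬝ᵥ x + xb ⬝ᵥ c := by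
    rw [Matrix.mulVec_sub, dotProduct_sub, sub_dotProduct,
      sub_dotProduct, hsym, hxc, hxbc]
    ring
  have hxBx : x ⬝ᵥ B.mulVec x = x ⬝ᵥ A.mulVec x + (μb * σb) * (x ⬝ᵥ x) := by
    rw [hBx, dotProduct_add, dotProduct_smul]
    simp [smul_eq_mul]
  have hxbBxb : xb ⬝ᵥ B.mulVec xb = xb ⬝ᵥ A.mulVec xb + (μb * σb) * (xb ⬝ᵥ xb) := by
    rw [hBx, dotProduct_add, dotProduct_smul]
    simp [smul_eq_mul]
  have hcomm : c ⬝ᵥ x = x ⬝ᵥ c := dotProduct_comm _ _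
  have hcomm2 : c ⬝ᵥ xb = xb ⬝ᵥ c := dotProduct_comm _ _
  -- scalar facts
  have hxb2 : (1/2) * (xb ⬝ᵥ xb) = σb + d := by
    have hμ : μb ≠ 0 := ne_of_gt hμpos
    have := mul_eq_zero.mp h3
    rcases this with h | h
    · exact absurd h hμ
    · linarith
  have he : e = σb ^ 2 / 2 := by linear_combination σb * hxb2 - h2
  have ht : ((1/2) * (x ⬝ᵥ x) - d) ^ 2 = σb ^ 2 := by nlinarith [hx, he]
  nlinarith [hq, key, hxBx, hxbBxb, hxb2, ht, hcomm, hcomm2,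
    mul_nonneg hμpos.le (sq_nonneg (σb - ((1/2) * (x ⬝ᵥ x) - d)))]
end

section
/- (Inverse global optimality, n-dimensional quadratic instance.) Let A be a symmetric n×n real matrix, c ∈ ℝⁿ, d, e ∈ ℝ. Suppose (x̄, μ̄, σ̄) ∈ ℝⁿ × ℝ × ℝ is a critical point of Ξ₁(x, μ, σ) = ½⟨x, (A + μσI)x⟩ − ⟨c, x⟩ − μ(½σ² + σd + e), with μ̄ < 0 and A + μ̄σ̄I negative definite. Then x̄ is a global maximizer of f(x) = ½⟨x, Ax⟩ − ⟨c, x⟩ over the feasible set {x ∈ ℝⁿ : ½(½‖x‖² − d)² − e = 0}: for every x in this set, f(x) ≤ f(x̄). -/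
open Matrix

/-- Inverse global optimality, n-dimensional quadratic
instance: a critical point `(x̄, μ̄, σ̄)` of
`Ξ₁(x, μ, σ) = ½⟨x,(A + μσI)x⟩ − ⟨c,x⟩ − μ(½σ² + σd + e)` with `μ̄ < 0` and
`A + μ̄σ̄I` negative definite yields a global maximizer `x̄` of
`f(x) = ½⟨x,Ax⟩ − ⟨c,x⟩` over `{x : ½(½‖x‖² − d)² − e = 0}`. -/
theorem inverse_global_optimality_nd
    (n : ℕ) (A : Matrix (Fin n) (Fin n) ℝ) (hA : A.IsSymm)
    (c : Fin n → ℝ) (d e : ℝ) (xb : Fin n → ℝ) (μb σb : ℝ)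
    (h1 : (A + (μb * σb) • (1 : Matrix (Fin n) (Fin n) ℝ)).mulVec xb = c)
    (h2 : σb * ((1/2) * (xb ⬝ᵥ xb)) = σb ^ 2 / 2 + σb * d + e)
    (h3 : μb * ((1/2) * (xb ⬝ᵥ xb) - σb - d) = 0)
    (hμneg : μb < 0)
    (hnd : (-(A + (μb * σb) • (1 : Matrix (Fin n) (Fin n) ℝ))).PosDef) :
    ∀ x : Fin n → ℝ, (1/2) * ((1/2) * (x ⬝ᵥ x) - d) ^ 2 - e = 0 →
      (1/2) * (x ⬝ᵥ A.mulVec x) - c ⬝ᵥ x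
        ≤ (1/2) * (xb ⬝ᵥ A.mulVec xb) - c ⬝ᵥ xb := by
  intro x hx
  set B : Matrix (Fin n) (Fin n) ℝ := A + (μb * σb) • (1 : Matrix (Fin n) (Fin n) ℝ) with hBdef
  have hB : B.IsSymm := by
    unfold Matrix.IsSymm
    rw [hBdef, Matrix.transpose_add, Matrix.transpose_smul, Matrix.transpose_one, hA]
  have hsymm : ∀ u v : Fin n → ℝ, u ⬝ᵥ B.mulVec v = v ⬝ᵥ B.mulVec u := by
    intro u v
    rw [Matrix.dotProduct_mulVec, ← Matrix.mulVec_transpose, hB, dotProduct_comm]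
  have hneg : ∀ y : Fin n → ℝ, y ⬝ᵥ B.mulVec y ≤ 0 := by
    intro y
    have := hnd.posSemidef.dotProduct_mulVec_nonneg y
    simp only [Matrix.neg_mulVec, dotProduct_neg, star_trivial] at this
    linarith
  have e1 : x ⬝ᵥ B.mulVec xb = c ⬝ᵥ x := by rw [h1, dotProduct_comm]
  have e2 : xb ⬝ᵥ B.mulVec x = c ⬝ᵥ x := by rw [hsymm xb x, e1]
  have e3 : xb ⬝ᵥ B.mulVec xb = c ⬝ᵥ xb := by rw [h1, dotProduct_comm]
  have hconc : (1/2) * (x ⬝ᵥ B.mulVec x) - c ⬝ᵥ x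
      ≤ (1/2) * (xb ⬝ᵥ B.mulVec xb) - c ⬝ᵥ xb := by
    have hD := hneg (x - xb)
    have hexp : (x - xb) ⬝ᵥ B.mulVec (x - xb)
        = x ⬝ᵥ B.mulVec x - 2 * (c ⬝ᵥ x) + c ⬝ᵥ xb := by
      rw [Matrix.mulVec_sub, sub_dotProduct, dotProduct_sub,
        dotProduct_sub, e1, e2, e3]
      ring
    linarith [hD, hexp, e3]
  have hAB : ∀ y : Fin n → ℝ, y ⬝ᵥ B.mulVec y = y ⬝ᵥ A.mulVec y + (μb * σb) * (y ⬝ᵥ y) := by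
    intro y
    rw [hBdef, Matrix.add_mulVec, Matrix.smul_mulVec, Matrix.one_mulVec,
      dotProduct_add, dotProduct_smul, smul_eq_mul]
  have htb : (1/2) * (xb ⬝ᵥ xb) = σb + d := by
    have hμ : μb ≠ 0 := ne_of_lt hμneg
    rcases mul_eq_zero.mp h3 with h | h
    · exact absurd h hμ
    · linarith
  have hσe : σb ^ 2 = 2 * e := by
    rw [htb] at h2
    linear_combination 2 * h2
  have hfeas : ((1/2) * (x ⬝ᵥ x) - d - σb) * ((1/2) * (x ⬝ᵥ x) - d + σb) = 0 := by
    linear_combination 2 * hx - hσe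
  have hkey : μb * σb * ((1/2) * (x ⬝ᵥ x) - (σb + d)) ≥ 0 := by
    rcases mul_eq_zero.mp hfeas with h | h
    · have ht : (1/2) * (x ⬝ᵥ x) = σb + d := by linarith
      rw [ht]; simp
    · have ht : (1/2) * (x ⬝ᵥ x) = d - σb := by linarith
      rw [ht]
      have h0 : μb * σb * (d - σb - (σb + d)) = (-2 * μb) * σb ^ 2 := by ring
      rw [h0]
      have := mul_nonneg (by linarith : (0:ℝ) ≤ -2 * μb) (sq_nonneg σb)
      linarith
  have hm : μb * σb * (xb ⬝ᵥ xb) ≤ μb * σb * (x ⬝ᵥ x) := by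
    have h' : xb ⬝ᵥ xb = 2 * (σb + d) := by linarith
    rw [h']
    nlinarith [hkey]
  have h4 := hAB x
  have h5 := hAB xb
  linarith [hconc, hm, h4, h5]
end

section
/- (Global optimality for a quadratic inequality constraint.) Let A be a symmetric n×n real matrix, c ∈ ℝⁿ, and r ∈ ℝ. Suppose x̄ ∈ ℝⁿ and λ̄ ∈ ℝ satisfy the KKT conditions: (A + λ̄I)x̄ = c, λ̄ ≥ 0, ½‖x̄‖² − r ≤ 0, λ̄·(½‖x̄‖² − r) = 0, and suppose A + λ̄I is positive semidefinite. Then x̄ is a global minimizer of f(x) = ½⟨x, Ax⟩ − ⟨c, x⟩ over {x ∈ ℝⁿ : ½‖x‖² − r ≤ 0}: for every x with ½‖x‖² ≤ r, f(x̄) ≤ f(x). -/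
open Matrix

/-- Global optimality for a quadratic inequality constraint:
if `(x̄, λ̄)` satisfies the KKT conditions for
`min {½⟨x,Ax⟩ − ⟨c,x⟩ : ½‖x‖² − r ≤ 0}` and `A + λ̄I` is positive
semidefinite, then `x̄` is a global minimizer over the feasible set. -/
theorem global_optimality_quadratic_inequality
    (n : ℕ) (A : Matrix (Fin n) (Fin n) ℝ) (hA : A.IsSymm)
    (c : Fin n → ℝ) (r : ℝ) (xb : Fin n → ℝ) (lb : ℝ)
    (hstat : (A + lb • (1 : Matrix (Fin n) (Fin n) ℝ)).mulVec xb = c)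
    (hdual : 0 ≤ lb)
    (hfeas : (1/2) * (xb ⬝ᵥ xb) - r ≤ 0)
    (hcompl : lb * ((1/2) * (xb ⬝ᵥ xb) - r) = 0)
    (hpsd : (A + lb • (1 : Matrix (Fin n) (Fin n) ℝ)).PosSemidef) :
    ∀ x : Fin n → ℝ, (1/2) * (x ⬝ᵥ x) ≤ r →
      (1/2) * (xb ⬝ᵥ A.mulVec xb) - c ⬝ᵥ xb
        ≤ (1/2) * (x ⬝ᵥ A.mulVec x) - c ⬝ᵥ x := by
  intro x hx
  set B : Matrix (Fin n) (Fin n) ℝ := A + lb • (1 : Matrix (Fin n) (Fin n) ℝ) with hB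
  have hBsymm : B.IsSymm := by
    unfold Matrix.IsSymm at hA ⊢
    simp [hB, Matrix.transpose_add, hA, Matrix.transpose_smul]
  have h1 : 0 ≤ (x - xb) ⬝ᵥ B.mulVec (x - xb) := by have := hpsd.dotProduct_mulVec_nonneg (x - xb); rwa [star_trivial] at this
  have hsym : xb ⬝ᵥ B.mulVec x = x ⬝ᵥ B.mulVec xb := by
    rw [Matrix.dotProduct_mulVec, ← hBsymm.eq, Matrix.vecMul_transpose, dotProduct_comm, hBsymm.eq]
  have hBx : ∀ v : Fin n → ℝ, B.mulVec v = A.mulVec v + lb • v := by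
    intro v
    simp [hB, Matrix.add_mulVec, Matrix.smul_mulVec]
  have hexp : (x - xb) ⬝ᵥ B.mulVec (x - xb)
      = x ⬝ᵥ B.mulVec x - 2 * (x ⬝ᵥ B.mulVec xb) + xb ⬝ᵥ B.mulVec xb := by
    rw [Matrix.mulVec_sub]
    simp only [sub_dotProduct, dotProduct_sub]
    rw [hsym]; ring
  have hcx : x ⬝ᵥ B.mulVec xb = x ⬝ᵥ c := by rw [← hstat]
  have hcxb : xb ⬝ᵥ B.mulVec xb = xb ⬝ᵥ c := by rw [← hstat]
  have hBxx : x ⬝ᵥ B.mulVec x = x ⬝ᵥ A.mulVec x + lb * (x ⬝ᵥ x) := by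
    rw [hBx]
    simp [dotProduct_add, dotProduct_smul, smul_eq_mul]
  have hBxbxb : xb ⬝ᵥ B.mulVec xb = xb ⬝ᵥ A.mulVec xb + lb * (xb ⬝ᵥ xb) := by
    rw [hBx]
    simp [dotProduct_add, dotProduct_smul, smul_eq_mul]
  have hccomm : c ⬝ᵥ x = x ⬝ᵥ c := dotProduct_comm c x
  have hccomm' : c ⬝ᵥ xb = xb ⬝ᵥ c := dotProduct_comm c xb
  have hlb : lb * ((1/2) * (x ⬝ᵥ x)) ≤ lb * r := by
    apply mul_le_mul_of_nonneg_left hx hdual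
  nlinarith [h1, hexp, hcx, hcxb, hBxx, hBxbxb, hccomm, hccomm', hlb, hcompl]
end
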